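/- Let {a_{i,j}}_{1≤i,j≤n} be nonnegative reals, Π uniformly random on S_n, Z = ∑_i a_{i,Π(i)}, V = (1/n)∑_{i,j} a_{i,j}², M = max_{i,j} a_{i,j}. Then |E[Z] - med(Z)| ≤ √(2V). -/

import Mathlib

open Finset

lemma L1 (n : ℕ) (g : Fin n → ℝ) (i : Fin n) :
    (n:ℝ) * ∑ π : Equiv.Perm (Fin n), g (π i) = (n.factorial : ℝ) * ∑ j, g j := by
  have key : ∀ k : Fin n, ∑ π : Equiv.Perm (Fin n), g (π k)
      = ∑ π : Equiv.Perm (Fin n), g (π i) := by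
    intro k
    rw [← Equiv.sum_comp (Equiv.mulRight (Equiv.swap i k)) (fun π : Equiv.Perm (Fin n) => g (π k))]
    refine Finset.sum_congr rfl fun π _ => ?_
    simp [Equiv.Perm.mul_apply]
  have h2 : ∑ k : Fin n, ∑ π : Equiv.Perm (Fin n), g (π k)
      = (n:ℝ) * ∑ π : Equiv.Perm (Fin n), g (π i) := by
    simp [key, Finset.sum_const, card_univ, nsmul_eq_mul]
  rw [← h2, Finset.sum_comm]
  have h3 : ∀ π : Equiv.Perm (Fin n), ∑ k, g (π k) = ∑ j, g j := fun π => Equiv.sum_comp π g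
  simp [h3, Finset.sum_const, card_univ, Fintype.card_perm, nsmul_eq_mul]

lemma L2 (n : ℕ) (F : Fin n → Fin n → ℝ) {i i' : Fin n} (h : i ≠ i') :
    (n:ℝ) * ((n:ℝ) - 1) * ∑ π : Equiv.Perm (Fin n), F (π i) (π i')
      = (n.factorial : ℝ) * ((∑ j, ∑ j', F j j') - ∑ j, F j j) := by
  have key : ∀ k k' : Fin n, k ≠ k' → ∑ π : Equiv.Perm (Fin n), F (π k) (π k')
      = ∑ π : Equiv.Perm (Fin n), F (π i) (π i') := by
    intro k k' hkk'
    set x : Fin n := Equiv.swap i k k' with hx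
    have hxi : x ≠ i := fun hxe =>
      hkk' ((Equiv.swap i k).injective ((Equiv.swap_apply_right i k).trans hxe.symm))
    set τ : Equiv.Perm (Fin n) := (Equiv.swap i' x) * (Equiv.swap i k) with hτ
    have hτk : τ k = i := by
      simp only [hτ, Equiv.Perm.mul_apply, Equiv.swap_apply_right]
      exact Equiv.swap_apply_of_ne_of_ne h (Ne.symm hxi)
    have hτk' : τ k' = i' := by
      simp only [hτ, Equiv.Perm.mul_apply, ← hx, Equiv.swap_apply_right]
    rw [← Equiv.sum_comp (Equiv.mulRight τ) (fun π : Equiv.Perm (Fin n) => F (π k) (π k'))]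
    refine Finset.sum_congr rfl fun π _ => ?_
    simp [Equiv.Perm.mul_apply, hτk, hτk']
  have hcard : (univ : Finset (Fin n)).offDiag.card = n * n - n := by
    simp [Finset.offDiag_card]
  have hA : ∑ p ∈ (univ : Finset (Fin n)).offDiag, ∑ π : Equiv.Perm (Fin n), F (π p.1) (π p.2)
      = ((n * n - n : ℕ) : ℝ) * ∑ π : Equiv.Perm (Fin n), F (π i) (π i') := by
    rw [Finset.sum_congr rfl (fun p hp => key p.1 p.2 (Finset.mem_offDiag.1 hp).2.2)]
    rw [Finset.sum_const, hcard, nsmul_eq_mul]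
  have hB : ∀ π : Equiv.Perm (Fin n), ∑ p ∈ (univ : Finset (Fin n)).offDiag, F (π p.1) (π p.2)
      = (∑ j, ∑ j', F j j') - ∑ j, F j j := by
    intro π
    have hsplit : ∑ p ∈ (univ : Finset (Fin n)) ×ˢ univ, F (π p.1) (π p.2)
        = ∑ p ∈ (univ : Finset (Fin n)).diag, F (π p.1) (π p.2)
          + ∑ p ∈ (univ : Finset (Fin n)).offDiag, F (π p.1) (π p.2) := by
      rw [← Finset.diag_union_offDiag, Finset.sum_union (Finset.disjoint_diag_offDiag _)]
    have h1 : ∑ p ∈ (univ : Finset (Fin n)) ×ˢ univ, F (π p.1) (π p.2) = ∑ j, ∑ j', F j j' := by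
      rw [Finset.sum_product]
      rw [show (∑ x : Fin n, ∑ y : Fin n, F (π x) (π y)) = ∑ x : Fin n, ∑ y : Fin n, F (π x) y from
        Finset.sum_congr rfl fun x _ => Equiv.sum_comp π (fun y => F (π x) y)]
      exact Equiv.sum_comp π (fun x => ∑ y, F x y)
    have h2 : ∑ p ∈ (univ : Finset (Fin n)).diag, F (π p.1) (π p.2) = ∑ j, F j j := by
      rw [Finset.sum_diag]
      exact Equiv.sum_comp π (fun j => F j j)
    linarith [hsplit, h1, h2]
  have hswap : ∑ p ∈ (univ : Finset (Fin n)).offDiag, ∑ π : Equiv.Perm (Fin n), F (π p.1) (π p.2)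
      = ∑ π : Equiv.Perm (Fin n), ∑ p ∈ (univ : Finset (Fin n)).offDiag, F (π p.1) (π p.2) :=
    Finset.sum_comm
  have hC : ∑ π : Equiv.Perm (Fin n), ∑ p ∈ (univ : Finset (Fin n)).offDiag, F (π p.1) (π p.2)
      = (n.factorial : ℝ) * ((∑ j, ∑ j', F j j') - ∑ j, F j j) := by
    simp [hB, Finset.sum_const, card_univ, Fintype.card_perm, nsmul_eq_mul, mul_sub]
  have hcast : ((n * n - n : ℕ) : ℝ) = (n:ℝ) * ((n:ℝ) - 1) := by
    have h0 : n ≤ n * n := by nlinarith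
    push_cast [h0]
    ring
  rw [← hcast, ← hA, hswap, hC]

/-- The second-moment identity. -/
lemma Kval (n : ℕ) (a : Fin n → Fin n → ℝ) :
    (n:ℝ) * ((n:ℝ) - 1) * ∑ π : Equiv.Perm (Fin n), (∑ i, a i (π i))^2
      = ((n:ℝ) - 1) * ((n.factorial : ℝ) * ∑ i, ∑ j, (a i j)^2)
        + (n.factorial : ℝ) * ((∑ i, ∑ j, a i j)^2
            - (∑ j, (∑ i, a i j)^2) - (∑ i, (∑ j, a i j)^2) + ∑ i, ∑ j, (a i j)^2) := by
  set W : Fin n → Fin n → ℝ := fun i i' => ∑ π : Equiv.Perm (Fin n), a i (π i) * a i' (π i') with hW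
  have hKsplit : ∑ π : Equiv.Perm (Fin n), (∑ i, a i (π i))^2 = ∑ i : Fin n, ∑ i' : Fin n, W i i' := by
    have e : ∀ π : Equiv.Perm (Fin n), (∑ i, a i (π i))^2
        = ∑ i : Fin n, ∑ i' : Fin n, a i (π i) * a i' (π i') := by
      intro π; rw [sq, Finset.sum_mul_sum]
    rw [Finset.sum_congr rfl fun π _ => e π, Finset.sum_comm]
    exact Finset.sum_congr rfl fun i _ => Finset.sum_comm
  -- diagonal terms
  have hdiag : ∀ i : Fin n, (n:ℝ) * W i i = (n.factorial : ℝ) * ∑ j, (a i j)^2 := by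
    intro i
    have := L1 n (fun j => a i j * a i j) i
    simpa [hW, ← sq] using this
  -- off-diagonal terms
  have hoff : ∀ i i' : Fin n, i ≠ i' → (n:ℝ) * ((n:ℝ) - 1) * W i i'
      = (n.factorial : ℝ) * ((∑ j, a i j) * (∑ j, a i' j) - ∑ j, a i j * a i' j) := by
    intro i i' hii
    have h := L2 n (fun j j' => a i j * a i' j') hii
    rw [show ((n:ℝ) * ((n:ℝ) - 1) * W i i') = (n:ℝ) * ((n:ℝ) - 1) * ∑ π : Equiv.Perm (Fin n), a i (π i) * a i' (π i') from by rw [hW], h, Finset.sum_mul_sum]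
  -- split inner sum at the diagonal
  have main : ∀ i : Fin n, (n:ℝ) * ((n:ℝ) - 1) * ∑ i' : Fin n, W i i'
      = ((n:ℝ) - 1) * ((n.factorial : ℝ) * ∑ j, (a i j)^2)
        + (n.factorial : ℝ) * ∑ i' ∈ univ.erase i,
            ((∑ j, a i j) * (∑ j, a i' j) - ∑ j, a i j * a i' j) := by
    intro i
    have hsp : ∑ i' : Fin n, W i i' = W i i + ∑ i' ∈ univ.erase i, W i i' := by
      rw [Finset.sum_erase_eq_sub (mem_univ i)]; ring
    rw [hsp, mul_add]
    congr 1
    · rw [show (n:ℝ)*((n:ℝ)-1) * W i i = ((n:ℝ)-1) * ((n:ℝ) * W i i) from by ring, hdiag i]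
    · rw [Finset.mul_sum, Finset.mul_sum]
      refine Finset.sum_congr rfl fun i' hi' => ?_
      exact hoff i i' (fun he => (Finset.mem_erase.1 hi').1 he.symm)
  -- sum the off-diagonal part
  have hRR : ∑ i : Fin n, ∑ i' : Fin n, (∑ j, a i j) * (∑ j, a i' j)
      = (∑ i, ∑ j, a i j)^2 := by
    rw [sq, Finset.sum_mul_sum]
  have hPP : ∑ i : Fin n, ∑ i' : Fin n, ∑ j, a i j * a i' j
      = ∑ j, (∑ i, a i j)^2 := by
    have e1 : ∀ i : Fin n, ∑ i' : Fin n, ∑ j, a i j * a i' j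
        = ∑ j : Fin n, ∑ i' : Fin n, a i j * a i' j := fun i => Finset.sum_comm
    rw [Finset.sum_congr rfl fun i _ => e1 i, Finset.sum_comm]
    refine Finset.sum_congr rfl fun j _ => ?_
    rw [sq, Finset.sum_mul_sum]
  have hfinal : ∑ i : Fin n, ∑ i' ∈ univ.erase i,
        ((∑ j, a i j) * (∑ j, a i' j) - ∑ j, a i j * a i' j)
      = ((∑ i, ∑ j, a i j)^2 - ∑ j, (∑ i, a i j)^2)
        - ((∑ i, (∑ j, a i j)^2) - ∑ i, ∑ j, (a i j)^2) := by
    have per : ∀ i : Fin n, ∑ i' ∈ univ.erase i,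
          ((∑ j, a i j) * (∑ j, a i' j) - ∑ j, a i j * a i' j)
        = (∑ i' : Fin n, ((∑ j, a i j) * (∑ j, a i' j) - ∑ j, a i j * a i' j))
          - ((∑ j, a i j)^2 - ∑ j, (a i j)^2) := by
      intro i
      rw [Finset.sum_erase_eq_sub (mem_univ i)]
      congr 1
      simp only [← pow_two]
    have hsplit2 : ∑ i : Fin n, ∑ i' : Fin n,
          ((∑ j, a i j) * (∑ j, a i' j) - ∑ j, a i j * a i' j)
        = (∑ i, ∑ j, a i j)^2 - ∑ j, (∑ i, a i j)^2 := by
      have e : ∀ i : Fin n, ∑ i' : Fin n, ((∑ j, a i j) * (∑ j, a i' j) - ∑ j, a i j * a i' j)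
          = (∑ i' : Fin n, (∑ j, a i j) * (∑ j, a i' j)) - ∑ i' : Fin n, ∑ j, a i j * a i' j :=
        fun i => Finset.sum_sub_distrib _ _
      rw [Finset.sum_congr rfl fun i _ => e i, Finset.sum_sub_distrib, hRR, hPP]
    rw [Finset.sum_congr rfl fun i _ => per i, Finset.sum_sub_distrib, hsplit2,
      Finset.sum_sub_distrib]
  -- assemble
  rw [hKsplit, Finset.mul_sum, Finset.sum_congr rfl fun i _ => main i,
    Finset.sum_add_distrib, ← Finset.mul_sum, ← Finset.mul_sum, ← Finset.mul_sum, hfinal]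
  ring

lemma arith (nn Fc Q S R2 C2 K T : ℝ) (h2 : 2 ≤ nn) (hF : 0 < Fc) (hQ : 0 ≤ Q)
    (hC2 : 0 ≤ C2) (hCS : S^2 ≤ nn * R2)
    (hK : nn * (nn - 1) * K = (nn - 1) * (Fc * Q) + Fc * (S^2 - C2 - R2 + Q))
    (hT : nn * T = Fc * S) :
    nn * (Fc * K - T^2) ≤ 2 * Fc^2 * Q := by
  have hpos : (0:ℝ) < nn * (nn - 1) := by nlinarith
  have eL : nn * (nn - 1) * (nn * (Fc * K - T^2))
      = nn * Fc * ((nn - 1) * (Fc * Q) + Fc * (S^2 - C2 - R2 + Q)) - (nn - 1) * (Fc * S)^2 := by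
    calc nn * (nn - 1) * (nn * (Fc * K - T^2))
        = nn * Fc * (nn * (nn - 1) * K) - (nn - 1) * (nn * T)^2 := by ring
      _ = _ := by rw [hK, hT]
  have key : nn * (nn - 1) * (nn * (Fc * K - T^2)) ≤ nn * (nn - 1) * (2 * Fc^2 * Q) := by
    rw [eL]
    have h1 := mul_le_mul_of_nonneg_left hCS (show (0:ℝ) ≤ Fc^2 by positivity)
    have h2' : (0:ℝ) ≤ Fc^2 * (nn * C2) := by positivity
    have h3 : (0:ℝ) ≤ Fc^2 * (nn * ((nn - 2) * Q)) :=
      mul_nonneg (by positivity) (mul_nonneg (by linarith) (mul_nonneg (by linarith) hQ))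
    nlinarith [h1, h2', h3]
  exact le_of_mul_le_mul_left key hpos

/-- Probability with respect to the uniform distribution on permutations of `{1,…,n}`. -/
noncomputable def Pr (n : ℕ) (p : Equiv.Perm (Fin n) → Prop) : ℝ :=
  (Nat.card {π : Equiv.Perm (Fin n) // p π} : ℝ) / (Nat.factorial n)

/-- Expectation with respect to the uniform distribution on permutations of `{1,…,n}`. -/
noncomputable def Ex (n : ℕ) (f : Equiv.Perm (Fin n) → ℝ) : ℝ :=
  (∑ π : Equiv.Perm (Fin n), f π) / (Nat.factorial n)

set_option maxHeartbeats 2000000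

/-- The mean and a median of a permuted sum of nonnegative terms differ by at most
`√(2V)`, with `V = (1/n) ∑_{i,j} a_{i,j}²`. -/
theorem stmt_10 (n : ℕ) (hn : 0 < n) (a : Fin n → Fin n → ℝ)
    (ha : ∀ i j, 0 ≤ a i j) (m : ℝ)
    (hm1 : Pr n (fun π => (∑ i, a i (π i)) ≥ m) ≥ 1/2)
    (hm2 : Pr n (fun π => (∑ i, a i (π i)) ≤ m) ≥ 1/2) :
    |Ex n (fun π => ∑ i, a i (π i)) - m|
      ≤ Real.sqrt (2 * ((1/n) * ∑ i, ∑ j, (a i j)^2)) := by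
  classical
  set Z : Equiv.Perm (Fin n) → ℝ := fun π => ∑ i, a i (π i) with hZdef
  set Fc : ℝ := (n.factorial : ℝ) with hFc
  have hFpos : (0:ℝ) < Fc := by
    rw [hFc]; exact_mod_cast n.factorial_pos
  have hnpos : (0:ℝ) < (n:ℝ) := by exact_mod_cast hn
  set Q : ℝ := ∑ i, ∑ j, (a i j)^2 with hQdef
  have hQ0 : 0 ≤ Q := by
    rw [hQdef]; positivity
  set T : ℝ := ∑ π : Equiv.Perm (Fin n), Z π with hTdef
  set μ : ℝ := Ex n Z with hμ
  have hm1' : Pr n (fun π => Z π ≥ m) ≥ 1/2 := hm1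
  have hm2' : Pr n (fun π => Z π ≤ m) ≥ 1/2 := hm2
  clear_value Z Fc Q T μ
  have e2 : μ * Fc = T := by
    rw [hμ, hFc]
    unfold Ex
    rw [div_mul_cancel₀ _ (show ((n.factorial:ℕ):ℝ) ≠ 0 from by exact_mod_cast n.factorial_pos.ne')]
    exact hTdef.symm
  -- expansion of the sum of squared deviations
  have e1 : ∑ π : Equiv.Perm (Fin n), (Z π - μ)^2
      = (∑ π : Equiv.Perm (Fin n), Z π ^ 2) - 2*μ*T + Fc * μ^2 := by
    have e : ∀ π : Equiv.Perm (Fin n), (Z π - μ)^2 = Z π^2 - 2*μ*Z π + μ^2 := fun π => by ring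
    rw [Finset.sum_congr rfl fun π _ => e π, Finset.sum_add_distrib, Finset.sum_sub_distrib,
      ← Finset.mul_sum, Finset.sum_const, card_univ, Fintype.card_perm, Fintype.card_fin,
      nsmul_eq_mul, ← hTdef, hFc]
  have expandFc : Fc * ∑ π : Equiv.Perm (Fin n), (Z π - μ)^2
      = Fc * (∑ π : Equiv.Perm (Fin n), Z π ^ 2) - T^2 := by
    rw [e1]; linear_combination (μ*Fc - T) * e2
  -- mean identity
  have hT : (n:ℝ) * T = Fc * (∑ i, ∑ j, a i j) := by
    rw [hTdef, hZdef, Finset.sum_comm, Finset.mul_sum, hFc]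
    rw [Finset.sum_congr rfl fun i _ => L1 n (fun j => a i j) i, ← Finset.mul_sum]
  -- variance bound
  have hvar : ∑ π : Equiv.Perm (Fin n), (Z π - μ)^2 ≤ Fc * (2 * ((1/(n:ℝ)) * Q)) := by
    rcases Nat.lt_or_ge n 2 with h2 | h2
    · -- n = 1
      have hn1 : n = 1 := by omega
      subst hn1
      have hall : ∀ π : Equiv.Perm (Fin 1), Z π = μ := by
        intro π
        have hsub : T = Z π := hTdef.trans (Fintype.sum_subsingleton Z π)
        have hF1 : Fc = 1 := by rw [hFc]; norm_num
        have hμT : μ = T := by rw [← e2, hF1, mul_one]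
        exact hsub.symm.trans hμT.symm
      have : ∑ π : Equiv.Perm (Fin 1), (Z π - μ)^2 = 0 := by
        refine Finset.sum_eq_zero fun π _ => ?_
        rw [hall π]; ring
      rw [this]
      exact mul_nonneg hFpos.le (mul_nonneg (by norm_num) (mul_nonneg (by positivity) hQ0))
    · -- n ≥ 2
      have hn2 : (2:ℝ) ≤ (n:ℝ) := by exact_mod_cast h2
      have hK := Kval n a
      have hCS : (∑ i, ∑ j, a i j)^2 ≤ (n:ℝ) * ∑ i, (∑ j, a i j)^2 := by
        have := Finset.sum_mul_sq_le_sq_mul_sq (univ : Finset (Fin n))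
          (fun _ => (1:ℝ)) (fun i => ∑ j, a i j)
        simpa [Finset.sum_const, card_univ, nsmul_eq_mul] using this
      have hC2 : (0:ℝ) ≤ ∑ j, (∑ i, a i j)^2 := by positivity
      have hR2 : (0:ℝ) ≤ ∑ i, (∑ j, a i j)^2 := by positivity
      -- key polynomial inequality
      have hKQ : (n:ℝ) * ((n:ℝ) - 1) * ∑ π : Equiv.Perm (Fin n), Z π ^2
          = ((n:ℝ) - 1) * (Fc * Q)
            + Fc * ((∑ i, ∑ j, a i j)^2
              - (∑ j, (∑ i, a i j)^2) - (∑ i, (∑ j, a i j)^2) + Q) := by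
        rw [hZdef, hQdef, hFc]; exact hK
      have key2 : (n:ℝ) * (Fc * (∑ π : Equiv.Perm (Fin n), Z π ^2) - T^2) ≤ 2 * Fc^2 * Q :=
        arith (n:ℝ) Fc Q (∑ i, ∑ j, a i j) (∑ i, (∑ j, a i j)^2) (∑ j, (∑ i, a i j)^2)
          (∑ π : Equiv.Perm (Fin n), Z π ^2) T hn2 hFpos hQ0 hC2 hCS hKQ hT
      -- conclude
      rw [← mul_le_mul_iff_right₀ (show (0:ℝ) < (n:ℝ) * Fc from mul_pos hnpos hFpos)]
      have hr : (n:ℝ) * Fc * (Fc * (2 * ((1/(n:ℝ)) * Q))) = 2 * Fc^2 * Q := by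
        field_simp
      rw [hr]
      calc (n:ℝ) * Fc * ∑ π : Equiv.Perm (Fin n), (Z π - μ)^2
          = (n:ℝ) * (Fc * (∑ π : Equiv.Perm (Fin n), Z π ^2) - T^2) := by
            rw [← expandFc]; ring
        _ ≤ 2 * Fc^2 * Q := key2
  -- median step: ∑ |Z - m| ≤ ∑ |Z - μ|
  have habs : ∑ π : Equiv.Perm (Fin n), |Z π - m| ≤ ∑ π : Equiv.Perm (Fin n), |Z π - μ| := by
    have cardfact : ∀ p : Equiv.Perm (Fin n) → Prop, Pr n p ≥ 1/2 →
        Fc ≤ 2 * ((univ.filter p).card : ℝ) := by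
      intro p hp
      unfold Pr at hp
      rw [Nat.card_eq_fintype_card, Fintype.card_subtype] at hp
      rw [ge_iff_le, le_div_iff₀ (show (0:ℝ) < (n.factorial:ℝ) from by exact_mod_cast n.factorial_pos)] at hp
      rw [hFc]; linarith
    have gen : ∀ (p : Equiv.Perm (Fin n) → Prop) (c : ℝ), 0 ≤ c →
        Fc ≤ 2 * ((univ.filter p).card : ℝ) →
        (∀ π, p π → |Z π - m| - |Z π - μ| ≤ -c) →
        (∀ π, ¬ p π → |Z π - m| - |Z π - μ| ≤ c) →
        ∑ π : Equiv.Perm (Fin n), |Z π - m| ≤ ∑ π : Equiv.Perm (Fin n), |Z π - μ| := by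
      intro p c hc0 hcard hyes hno
      have hsplit := Finset.sum_filter_add_sum_filter_not (univ : Finset (Equiv.Perm (Fin n)))
        p (fun π => |Z π - m| - |Z π - μ|)
      have h1 : ∑ π ∈ univ.filter p, (|Z π - m| - |Z π - μ|)
          ≤ ((univ.filter p).card : ℕ) • (-c) :=
        Finset.sum_le_card_nsmul _ _ _ (fun π hπ => hyes π (Finset.mem_filter.1 hπ).2)
      have h2 : ∑ π ∈ univ.filter (fun π => ¬ p π), (|Z π - m| - |Z π - μ|)
          ≤ ((univ.filter (fun π => ¬ p π)).card : ℕ) • c :=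
        Finset.sum_le_card_nsmul _ _ _ (fun π hπ => hno π (Finset.mem_filter.1 hπ).2)
      rw [nsmul_eq_mul] at h1 h2
      have hcc := Finset.card_filter_add_card_filter_not
        (s := (univ : Finset (Equiv.Perm (Fin n)))) (p := p)
      rw [card_univ, Fintype.card_perm, Fintype.card_fin] at hcc
      have hc' : ((univ.filter p).card : ℝ)
          + ((univ.filter (fun π => ¬ p π)).card : ℝ) = Fc := by
        rw [hFc]; exact_mod_cast hcc
      have htot : ∑ π : Equiv.Perm (Fin n), (|Z π - m| - |Z π - μ|) ≤ 0 := by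
        rw [← hsplit]
        nlinarith [h1, h2, hc', hcard,
          mul_nonneg hc0 (by linarith : (0:ℝ) ≤ 2 * ((univ.filter p).card : ℝ) - Fc)]
      rw [Finset.sum_sub_distrib] at htot
      linarith
    rcases le_total m μ with hcase | hcase
    · refine gen (fun π => Z π ≤ m) (μ - m) (by linarith)
        (cardfact (fun π => Z π ≤ m) hm2') (fun π hzm => ?_) (fun π hzm => ?_)
      · rcases abs_cases (Z π - m) with ⟨u1,u2⟩|⟨u1,u2⟩ <;>
          rcases abs_cases (Z π - μ) with ⟨v1,v2⟩|⟨v1,v2⟩ <;> nlinarith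
      · push_neg at hzm
        rcases abs_cases (Z π - m) with ⟨u1,u2⟩|⟨u1,u2⟩ <;>
          rcases abs_cases (Z π - μ) with ⟨v1,v2⟩|⟨v1,v2⟩ <;> nlinarith
    · refine gen (fun π => Z π ≥ m) (m - μ) (by linarith)
        (cardfact (fun π => Z π ≥ m) hm1') (fun π hzm => ?_) (fun π hzm => ?_)
      · rcases abs_cases (Z π - m) with ⟨u1,u2⟩|⟨u1,u2⟩ <;>
          rcases abs_cases (Z π - μ) with ⟨v1,v2⟩|⟨v1,v2⟩ <;> nlinarith
      · push_neg at hzm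
        rcases abs_cases (Z π - m) with ⟨u1,u2⟩|⟨u1,u2⟩ <;>
          rcases abs_cases (Z π - μ) with ⟨v1,v2⟩|⟨v1,v2⟩ <;> nlinarith
  -- Cauchy-Schwarz
  have hCS2 : (∑ π : Equiv.Perm (Fin n), |Z π - μ|)^2
      ≤ Fc * ∑ π : Equiv.Perm (Fin n), (Z π - μ)^2 := by
    have := Finset.sum_mul_sq_le_sq_mul_sq (univ : Finset (Equiv.Perm (Fin n)))
      (fun _ => (1:ℝ)) (fun π => |Z π - μ|)
    simpa [Finset.sum_const, card_univ, Fintype.card_perm, Fintype.card_fin, nsmul_eq_mul,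
      sq_abs, hFc] using this
  -- step 1
  have hstep1 : Fc * |μ - m| ≤ ∑ π : Equiv.Perm (Fin n), |Z π - m| := by
    have h1 : Fc * |μ - m| = |T - Fc * m| := by
      have e3 : T - Fc * m = Fc * (μ - m) := by linear_combination -e2
      rw [e3, abs_mul, abs_of_pos hFpos]
    have h2 : T - Fc * m = ∑ π : Equiv.Perm (Fin n), (Z π - m) := by
      rw [Finset.sum_sub_distrib, Finset.sum_const, card_univ, Fintype.card_perm,
        Fintype.card_fin, nsmul_eq_mul, ← hTdef, hFc]
    rw [h1, h2]
    exact Finset.abs_sum_le_sum_abs _ _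
  -- assemble
  have hrhs0 : (0:ℝ) ≤ 2 * ((1/(n:ℝ)) * Q) :=
    mul_nonneg (by norm_num) (mul_nonneg (by positivity) hQ0)
  rw [Real.le_sqrt (abs_nonneg _) hrhs0]
  have c1 : Fc * |μ - m| ≤ ∑ π : Equiv.Perm (Fin n), |Z π - μ| := hstep1.trans habs
  have c2 : (Fc * |μ - m|)^2 ≤ Fc * (Fc * (2 * ((1/(n:ℝ)) * Q))) := by
    calc (Fc * |μ - m|)^2 ≤ (∑ π : Equiv.Perm (Fin n), |Z π - μ|)^2 := by
          apply pow_le_pow_left₀ (by positivity) c1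
      _ ≤ Fc * ∑ π : Equiv.Perm (Fin n), (Z π - μ)^2 := hCS2
      _ ≤ Fc * (Fc * (2 * ((1/(n:ℝ)) * Q))) := by
          exact mul_le_mul_of_nonneg_left hvar hFpos.le
  have hF2 : (0:ℝ) < Fc^2 := pow_pos hFpos 2
  have c3 : Fc^2 * |μ - m|^2 ≤ Fc^2 * (2 * ((1/(n:ℝ)) * Q)) := by
    calc Fc^2 * |μ - m|^2 = (Fc * |μ - m|)^2 := by ring
      _ ≤ Fc * (Fc * (2 * ((1/(n:ℝ)) * Q))) := c2
      _ = Fc^2 * (2 * ((1/(n:ℝ)) * Q)) := by ring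
  exact le_of_mul_le_mul_left c3 hF2
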